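/- Let p be a prime and let α, β ∈ ℤ_p be such that the polynomial X² − βX − α has no root modulo p (equivalently, its reduction is irreducible over 𝔽_p). Let R = {a·I + c·Δ : a, c ∈ ℤ_p} ⊆ M₂(ℤ_p), where Δ = [[0, α], [1, β]]; R is a subring of M₂(ℤ_p). Then for every integer j ≥ 1, the set {a·I + c·Δ ∈ R^× : c ∈ p^jℤ_p} is a subgroup of the unit group R^× of index p^{j−1}(p + 1). -/

import Mathlib

open Matrix

namespace Stmt16Aux

variable {p : ℕ} [hp : Fact (Nat.Prime p)]

lemma not_dvd_iff_isUnit (x : ℤ_[p]) : ¬ (p:ℤ_[p]) ∣ x ↔ IsUnit x := by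
  rw [← PadicInt.norm_lt_one_iff_dvd, PadicInt.isUnit_iff, not_lt]
  exact ⟨fun h => le_antisymm (PadicInt.norm_le_one x) h, fun h => h.ge⟩

lemma toZMod_eq_zero_iff (x : ℤ_[p]) : PadicInt.toZMod x = 0 ↔ (p:ℤ_[p]) ∣ x := by
  rw [← RingHom.mem_ker, PadicInt.ker_toZMod, PadicInt.maximalIdeal_eq_span_p,
    Ideal.mem_span_singleton]

lemma p_not_dvd_one : ¬ (p:ℤ_[p]) ∣ (1:ℤ_[p]) := fun h =>
  PadicInt.p_nonunit (isUnit_of_dvd_one h)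

section Ring

variable (α β : ℤ_[p])

lemma nf (a c : ℤ_[p]) : a • (1 : Matrix (Fin 2) (Fin 2) ℤ_[p]) + c • !![0, α; 1, β]
    = !![a, c*α; c, a + c*β] := by
  ext i j
  fin_cases i <;> fin_cases j <;> simp [Matrix.one_apply]

lemma add_nf (a c a' c' : ℤ_[p]) :
    !![a, c*α; c, a + c*β] + !![a', c'*α; c', a' + c'*β]
      = !![a+a', (c+c')*α; c+c', (a+a') + (c+c')*β] := by
  ext i j; fin_cases i <;> fin_cases j <;> simp <;> ring

lemma neg_nf (a c : ℤ_[p]) :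
    -(!![a, c*α; c, a + c*β]) = !![-a, (-c)*α; -c, (-a) + (-c)*β] := by
  ext i j; fin_cases i <;> fin_cases j <;> simp [neg_mul] <;> ring_nf

lemma mul_nf (a c a' c' : ℤ_[p]) :
    !![a, c*α; c, a + c*β] * !![a', c'*α; c', a' + c'*β]
      = !![a*a' + c*c'*α, (a*c' + c*a' + c*c'*β)*α; a*c' + c*a' + c*c'*β,
          (a*a' + c*c'*α) + (a*c' + c*a' + c*c'*β)*β] := by
  rw [Matrix.mul_fin_two]
  have e1 : a*a' + c*α*c' = a*a' + c*c'*α := by ring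
  have e2 : a*(c'*α) + c*α*(a'+c'*β) = (a*c' + c*a' + c*c'*β)*α := by ring
  have e3 : c*a' + (a+c*β)*c' = a*c' + c*a' + c*c'*β := by ring
  have e4 : c*(c'*α) + (a+c*β)*(a'+c'*β) = (a*a' + c*c'*α) + (a*c' + c*a' + c*c'*β)*β := by ring
  rw [e1, e2, e3, e4]

lemma zero_nf : (0 : Matrix (Fin 2) (Fin 2) ℤ_[p]) = !![(0:ℤ_[p]), 0*α; 0, 0 + 0*β] := by
  ext i j; fin_cases i <;> fin_cases j <;> simp

lemma one_nf : (1 : Matrix (Fin 2) (Fin 2) ℤ_[p]) = !![(1:ℤ_[p]), 0*α; 0, 1 + 0*β] := by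
  ext i j; fin_cases i <;> fin_cases j <;> simp [Matrix.one_apply]

/-- The subring `{a·1 + c·Δ}` of `M₂(ℤ_p)`. -/
def Rring : Subring (Matrix (Fin 2) (Fin 2) ℤ_[p]) where
  carrier := {M | ∃ a c : ℤ_[p], M = !![a, c*α; c, a + c*β]}
  zero_mem' := ⟨0, 0, zero_nf α β⟩
  one_mem' := ⟨1, 0, one_nf α β⟩
  add_mem' := by
    rintro _ _ ⟨a, c, rfl⟩ ⟨a', c', rfl⟩
    exact ⟨a + a', c + c', add_nf α β a c a' c'⟩
  neg_mem' := by
    rintro _ ⟨a, c, rfl⟩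
    exact ⟨-a, -c, neg_nf α β a c⟩
  mul_mem' := by
    rintro _ _ ⟨a, c, rfl⟩ ⟨a', c', rfl⟩
    exact ⟨a*a' + c*c'*α, a*c' + c*a' + c*c'*β, mul_nf α β a c a' c'⟩

end Ring

variable {α β : ℤ_[p]}

lemma mem_Rring_iff {M : Matrix (Fin 2) (Fin 2) ℤ_[p]} :
    M ∈ Rring α β ↔ ∃ a c : ℤ_[p], M = !![a, c*α; c, a + c*β] := Iff.rfl

/-- The `a`-coordinate of an element of `R`. -/
def aOf (r : Rring α β) : ℤ_[p] := (r : Matrix (Fin 2) (Fin 2) ℤ_[p]) 0 0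

/-- The `c`-coordinate of an element of `R`. -/
def cOf (r : Rring α β) : ℤ_[p] := (r : Matrix (Fin 2) (Fin 2) ℤ_[p]) 1 0

lemma coe_nf (r : Rring α β) :
    (r : Matrix (Fin 2) (Fin 2) ℤ_[p]) = !![aOf r, cOf r * α; cOf r, aOf r + cOf r * β] := by
  obtain ⟨a, c, h⟩ := r.2
  have ha : aOf r = a := by simp [aOf, h]
  have hc : cOf r = c := by simp [cOf, h]
  rw [ha, hc, h]

lemma aOf_cOf_eq {r : Rring α β} {a c : ℤ_[p]}
    (h : (r : Matrix (Fin 2) (Fin 2) ℤ_[p]) = !![a, c*α; c, a + c*β]) :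
    aOf r = a ∧ cOf r = c := ⟨by simp [aOf, h], by simp [cOf, h]⟩

lemma aOf_one : aOf (1 : Rring α β) = 1 := by
  simp [aOf, Matrix.one_apply]

lemma cOf_one : cOf (1 : Rring α β) = 0 := by
  simp [cOf, Matrix.one_apply]

lemma aOf_mul (r s : Rring α β) :
    aOf (r * s) = aOf r * aOf s + cOf r * cOf s * α := by
  have h : ((r * s : Rring α β) : Matrix (Fin 2) (Fin 2) ℤ_[p]) = (r : _) * (s : _) := rfl
  rw [coe_nf r, coe_nf s, mul_nf] at h
  exact (aOf_cOf_eq h).1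

lemma cOf_mul (r s : Rring α β) :
    cOf (r * s) = aOf r * cOf s + cOf r * aOf s + cOf r * cOf s * β := by
  have h : ((r * s : Rring α β) : Matrix (Fin 2) (Fin 2) ℤ_[p]) = (r : _) * (s : _) := rfl
  rw [coe_nf r, coe_nf s, mul_nf] at h
  exact (aOf_cOf_eq h).2

/-- The "norm/determinant" form. -/
noncomputable def dOf (r : Rring α β) : ℤ_[p] := aOf r ^ 2 + aOf r * cOf r * β - cOf r ^ 2 * α

lemma dOf_mul (r s : Rring α β) : dOf (r * s) = dOf r * dOf s := by
  simp only [dOf, aOf_mul, cOf_mul]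
  ring

lemma dOf_one : dOf (1 : Rring α β) = 1 := by simp [dOf, aOf_one, cOf_one]

lemma isUnit_dOf (u : (Rring α β)ˣ) : IsUnit (dOf (u : Rring α β)) := by
  refine IsUnit.of_mul_eq_one (dOf ((u⁻¹ : (Rring α β)ˣ) : Rring α β)) ?_
  rw [← dOf_mul, u.mul_inv, dOf_one]

lemma inv_relations (u : (Rring α β)ˣ) :
    cOf ((u⁻¹ : (Rring α β)ˣ) : Rring α β) * dOf (u : Rring α β) = -(cOf (u : Rring α β)) ∧
    aOf ((u⁻¹ : (Rring α β)ˣ) : Rring α β) * dOf (u : Rring α β)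
      = aOf (u : Rring α β) + cOf (u : Rring α β) * β := by
  set a := aOf (u : Rring α β)
  set c := cOf (u : Rring α β)
  set a' := aOf ((u⁻¹ : (Rring α β)ˣ) : Rring α β)
  set c' := cOf ((u⁻¹ : (Rring α β)ˣ) : Rring α β)
  have h1 : ((u : Rring α β) * ((u⁻¹ : (Rring α β)ˣ) : Rring α β)) = 1 := u.mul_inv
  have eq1 : a * a' + c * c' * α = 1 := by
    rw [← aOf_mul, h1, aOf_one]
  have eq2 : a * c' + c * a' + c * c' * β = 0 := by
    rw [← cOf_mul, h1, cOf_one]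
  constructor
  · simp only [dOf]
    linear_combination a * eq2 - c * eq1
  · simp only [dOf]
    linear_combination (a + c * β) * eq1 - c * α * eq2

lemma not_dvd_aOf (u : (Rring α β)ˣ) (hc : (p:ℤ_[p]) ∣ cOf (u : Rring α β)) :
    ¬ (p:ℤ_[p]) ∣ aOf (u : Rring α β) := by
  intro ha
  have hd := isUnit_dOf u
  rw [← not_dvd_iff_isUnit] at hd
  apply hd
  simp only [dOf]
  have h1 : (p:ℤ_[p]) ∣ aOf (u : Rring α β) ^ 2 := by rw [sq]; exact ha.mul_right _
  have h2 : (p:ℤ_[p]) ∣ aOf (u : Rring α β) * cOf (u : Rring α β) * β := (ha.mul_right _).mul_right _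
  have h3 : (p:ℤ_[p]) ∣ cOf (u : Rring α β) ^ 2 * α := by
    rw [sq]; exact ((hc.mul_right _).mul_right _)
  exact dvd_sub (dvd_add h1 h2) h3


section Units

lemma isUnit_det_of (hirr : ∀ x : ℤ_[p], ¬ (p : ℤ_[p]) ∣ (x^2 - β * x - α)) (a c : ℤ_[p]) (h : ¬ (p:ℤ_[p]) ∣ a ∨ ¬ (p:ℤ_[p]) ∣ c) :
    IsUnit (a^2 + a*c*β - c^2*α) := by
  rw [← not_dvd_iff_isUnit]
  by_cases hc : (p:ℤ_[p]) ∣ c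
  · have ha : ¬ (p:ℤ_[p]) ∣ a := h.resolve_right (not_not_intro hc)
    intro hd
    apply ha
    have h2 : (p:ℤ_[p]) ∣ a ^ 2 := by
      have : a^2 = (a^2 + a*c*β - c^2*α) - a*c*β + c^2*α := by ring
      rw [this]
      exact dvd_add (dvd_sub hd ((hc.mul_left _).mul_right _)) (by rw [sq]; exact ((hc.mul_right _).mul_right _))
    exact (PadicInt.prime_p.dvd_of_dvd_pow h2)
  · -- c is a unit
    have hcu : IsUnit c := (not_dvd_iff_isUnit c).mp hc
    set e : ℤ_[p] := ↑hcu.unit⁻¹ with he_def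
    have he : c * e = 1 := hcu.mul_val_inv
    intro hd
    have key : c^2 * ((-(a*e))^2 - β * (-(a*e)) - α) = a^2 + a*c*β - c^2*α := by
      linear_combination (a^2*(c*e+1) + a*β*c) * he
    have : (p:ℤ_[p]) ∣ c^2 * ((-(a*e))^2 - β * (-(a*e)) - α) := key ▸ hd
    rcases PadicInt.prime_p.dvd_mul.mp this with h1 | h1
    · exact hc (PadicInt.prime_p.dvd_of_dvd_pow h1)
    · exact hirr _ h1

/-- Build a unit of `R` from coordinates `(a, c)` not both divisible by `p`. -/
noncomputable def mkUnit (hirr : ∀ x : ℤ_[p], ¬ (p : ℤ_[p]) ∣ (x^2 - β * x - α)) (a c : ℤ_[p]) (h : ¬ (p:ℤ_[p]) ∣ a ∨ ¬ (p:ℤ_[p]) ∣ c) :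
    (Rring α β)ˣ := by
  have hd : IsUnit (a^2 + a*c*β - c^2*α) := isUnit_det_of hirr a c h
  set e : ℤ_[p] := ↑hd.unit⁻¹ with he_def
  have he : (a^2 + a*c*β - c^2*α) * e = 1 := hd.mul_val_inv
  refine ⟨⟨!![a, c*α; c, a + c*β], ⟨a, c, rfl⟩⟩,
    ⟨!![e*(a+c*β), (-(e*c))*α; -(e*c), e*(a+c*β) + (-(e*c))*β], ⟨e*(a+c*β), -(e*c), rfl⟩⟩, ?_, ?_⟩
  · apply Subtype.ext
    show !![a, c*α; c, a + c*β] * !![e*(a+c*β), (-(e*c))*α; -(e*c), e*(a+c*β) + (-(e*c))*β]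
      = (1 : Matrix (Fin 2) (Fin 2) ℤ_[p])
    rw [mul_nf α β a c (e*(a+c*β)) (-(e*c)),
      show a*(e*(a+c*β)) + c*(-(e*c))*α = 1 by linear_combination he,
      show a*(-(e*c)) + c*(e*(a+c*β)) + c*(-(e*c))*β = 0 by ring, one_nf α β]
  · apply Subtype.ext
    show !![e*(a+c*β), (-(e*c))*α; -(e*c), e*(a+c*β) + (-(e*c))*β] * !![a, c*α; c, a + c*β]
      = (1 : Matrix (Fin 2) (Fin 2) ℤ_[p])
    rw [mul_nf α β (e*(a+c*β)) (-(e*c)) a c,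
      show (e*(a+c*β))*a + (-(e*c))*c*α = 1 by linear_combination he,
      show (e*(a+c*β))*c + (-(e*c))*a + (-(e*c))*c*β = 0 by ring, one_nf α β]

lemma mkUnit_aOf (hirr : ∀ x : ℤ_[p], ¬ (p : ℤ_[p]) ∣ (x^2 - β * x - α)) (a c : ℤ_[p]) (h) : aOf ((mkUnit hirr a c h : (Rring α β)ˣ) : Rring α β) = a := by
  simp [mkUnit, aOf]

lemma mkUnit_cOf (hirr : ∀ x : ℤ_[p], ¬ (p : ℤ_[p]) ∣ (x^2 - β * x - α)) (a c : ℤ_[p]) (h) : cOf ((mkUnit hirr a c h : (Rring α β)ˣ) : Rring α β) = c := by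
  simp [mkUnit, cOf]

end Units

/-- The subgroup `H_j = {a + cΔ ∈ R^× : p^j ∣ c}`. -/
def Hsub (α β : ℤ_[p]) (j : ℕ) : Subgroup (Rring α β)ˣ where
  carrier := {u | (p:ℤ_[p])^j ∣ cOf (u : Rring α β)}
  one_mem' := by
    show (p:ℤ_[p])^j ∣ cOf ((1 : (Rring α β)ˣ) : Rring α β)
    rw [Units.val_one, cOf_one]
    exact dvd_zero _
  mul_mem' := by
    intro u v hu hv
    show (p:ℤ_[p])^j ∣ cOf ((u * v : (Rring α β)ˣ) : Rring α β)
    rw [Units.val_mul, cOf_mul]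
    exact dvd_add (dvd_add (hv.mul_left _) (hu.mul_right _)) ((hu.mul_right _).mul_right _)
  inv_mem' := by
    intro u hu
    show (p:ℤ_[p])^j ∣ cOf ((u⁻¹ : (Rring α β)ˣ) : Rring α β)
    have hd := isUnit_dOf u
    have he : dOf (u : Rring α β) * ↑hd.unit⁻¹ = 1 := hd.mul_val_inv
    have h1 := (inv_relations u).1
    have : cOf ((u⁻¹ : (Rring α β)ˣ) : Rring α β)
        = -(cOf (u : Rring α β)) * ↑hd.unit⁻¹ := by
      calc cOf ((u⁻¹ : (Rring α β)ˣ) : Rring α β)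
          = cOf ((u⁻¹ : (Rring α β)ˣ) : Rring α β) * (dOf (u : Rring α β) * ↑hd.unit⁻¹) := by
            rw [he, mul_one]
        _ = (cOf ((u⁻¹ : (Rring α β)ˣ) : Rring α β) * dOf (u : Rring α β)) * ↑hd.unit⁻¹ := by ring
        _ = -(cOf (u : Rring α β)) * ↑hd.unit⁻¹ := by rw [h1]
    rw [this]
    exact ((hu.neg_right).mul_right _)

lemma mem_Hsub {j : ℕ} {u : (Rring α β)ˣ} :
    u ∈ Hsub α β j ↔ (p:ℤ_[p])^j ∣ cOf (u : Rring α β) := Iff.rfl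

lemma dOf_mul_cross (u v : (Rring α β)ˣ) :
    dOf (u : Rring α β) * cOf (((u⁻¹ * v : (Rring α β)ˣ)) : Rring α β)
      = aOf (u : Rring α β) * cOf (v : Rring α β)
        - cOf (u : Rring α β) * aOf (v : Rring α β) := by
  have hc := (inv_relations u).1
  have ha := (inv_relations u).2
  have hm : (((u⁻¹ * v : (Rring α β)ˣ)) : Rring α β)
      = ((u⁻¹ : (Rring α β)ˣ) : Rring α β) * (v : Rring α β) := rfl
  rw [hm, cOf_mul]
  linear_combination (cOf (v : Rring α β)) * ha
    + (aOf (v : Rring α β) + cOf (v : Rring α β) * β) * hc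

lemma mem_iff_cross (j : ℕ) (u v : (Rring α β)ˣ) :
    u⁻¹ * v ∈ Hsub α β j ↔ (p:ℤ_[p])^j ∣
      (aOf (u : Rring α β) * cOf (v : Rring α β)
        - cOf (u : Rring α β) * aOf (v : Rring α β)) := by
  rw [mem_Hsub]
  have hd := isUnit_dOf u
  have he : dOf (u : Rring α β) * ↑hd.unit⁻¹ = 1 := hd.mul_val_inv
  constructor
  · intro h
    rw [← dOf_mul_cross]
    exact h.mul_left _
  · intro h
    have : cOf (((u⁻¹ * v : (Rring α β)ˣ)) : Rring α β)
        = ↑hd.unit⁻¹ * (dOf (u : Rring α β) * cOf (((u⁻¹ * v : (Rring α β)ˣ)) : Rring α β)) := by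
      rw [← mul_assoc, mul_comm (↑hd.unit⁻¹ : ℤ_[p]), he, one_mul]
    rw [this, dOf_mul_cross]
    exact h.mul_left _


section Counting

/-- Invariant for cosets of `H_1`. -/
noncomputable def g1 (u : (Rring α β)ˣ) : Option (ZMod p) :=
  if PadicInt.toZMod (aOf (u : Rring α β)) = 0 then none
  else some (PadicInt.toZMod (cOf (u : Rring α β)) / PadicInt.toZMod (aOf (u : Rring α β)))

lemma cbar_ne (u : (Rring α β)ˣ) (ha : PadicInt.toZMod (aOf (u : Rring α β)) = 0) :
    PadicInt.toZMod (cOf (u : Rring α β)) ≠ 0 := by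
  intro h
  rw [toZMod_eq_zero_iff] at ha h
  exact not_dvd_aOf u h ha

lemma key1 (u v : (Rring α β)ˣ) : g1 u = g1 v ↔ u⁻¹ * v ∈ Hsub α β 1 := by
  rw [mem_iff_cross, pow_one, ← toZMod_eq_zero_iff, map_sub, _root_.map_mul, _root_.map_mul]
  by_cases hu : PadicInt.toZMod (aOf (u : Rring α β)) = 0 <;>
    by_cases hv : PadicInt.toZMod (aOf (v : Rring α β)) = 0
  · simp only [g1, if_pos hu, if_pos hv]
    rw [hu, hv]
    simp
  · simp only [g1, if_pos hu, if_neg hv]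
    constructor
    · intro h; exact absurd h (by simp)
    · intro h
      exfalso
      rw [hu] at h
      have h2 : PadicInt.toZMod (cOf (u : Rring α β)) * PadicInt.toZMod (aOf (v : Rring α β))
          = 0 := by linear_combination -h
      exact absurd ((mul_eq_zero.mp h2).resolve_right hv) (cbar_ne u hu)
  · simp only [g1, if_neg hu, if_pos hv]
    constructor
    · intro h; exact absurd h (by simp)
    · intro h
      exfalso
      rw [hv] at h
      have h2 : PadicInt.toZMod (aOf (u : Rring α β)) * PadicInt.toZMod (cOf (v : Rring α β))
          = 0 := by linear_combination h
      exact absurd ((mul_eq_zero.mp h2).resolve_left hu) (cbar_ne v hv)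
  · simp only [g1, if_neg hu, if_neg hv, Option.some.injEq]
    rw [div_eq_div_iff hu hv, sub_eq_zero]
    constructor <;> intro h <;> linear_combination -h

lemma card1 (hirr : ∀ x : ℤ_[p], ¬ (p : ℤ_[p]) ∣ (x^2 - β * x - α)) :
    Nat.card ((Rring α β)ˣ ⧸ Hsub α β 1) = p + 1 := by
  have e : ((Rring α β)ˣ ⧸ Hsub α β 1) ≃ Option (ZMod p) := by
    refine Equiv.ofBijective
      (fun x => Quotient.liftOn' x g1
        (fun u v h => (key1 u v).mpr (QuotientGroup.leftRel_apply.mp h))) ⟨?_, ?_⟩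
    · intro x y
      refine Quotient.inductionOn₂' x y fun u v h => ?_
      exact Quotient.sound' (QuotientGroup.leftRel_apply.mpr ((key1 u v).mp h))
    · intro z
      match z with
      | none =>
        refine ⟨Quotient.mk'' (mkUnit hirr 0 1 (Or.inr p_not_dvd_one)), ?_⟩
        show g1 _ = none
        simp only [g1, mkUnit_aOf]
        simp
      | some z =>
        refine ⟨Quotient.mk'' (mkUnit hirr 1 ((z.val : ℕ) : ℤ_[p]) (Or.inl p_not_dvd_one)), ?_⟩
        show g1 _ = some z
        simp only [g1, mkUnit_aOf, mkUnit_cOf, _root_.map_one]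
        rw [if_neg one_ne_zero, div_one, map_natCast]
        rw [ZMod.natCast_rightInverse z]
  rw [Nat.card_congr e, Finite.card_option, Nat.card_zmod]

/-- Invariant for cosets of `H_{i+1}` inside `H_i`. -/
noncomputable def g2 (i : ℕ) (u : Hsub α β i) : ZMod p :=
  PadicInt.toZMod ((mem_Hsub.mp u.2).choose)
    / PadicInt.toZMod (aOf ((u : (Rring α β)ˣ) : Rring α β))

lemma abar_ne (i : ℕ) (hi : 1 ≤ i) (u : Hsub α β i) :
    PadicInt.toZMod (aOf ((u : (Rring α β)ˣ) : Rring α β)) ≠ 0 := by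
  rw [Ne, toZMod_eq_zero_iff]
  exact not_dvd_aOf _ ((dvd_pow_self (p:ℤ_[p]) (by omega : i ≠ 0)).trans (mem_Hsub.mp u.2))

lemma key2 (i : ℕ) (hi : 1 ≤ i) (u v : Hsub α β i) :
    g2 i u = g2 i v ↔ u⁻¹ * v ∈ (Hsub α β (i+1)).subgroupOf (Hsub α β i) := by
  rw [Subgroup.mem_subgroupOf]
  have hcoe : ((u⁻¹ * v : Hsub α β i) : (Rring α β)ˣ)
      = ((u : (Rring α β)ˣ))⁻¹ * (v : (Rring α β)ˣ) := rfl
  rw [hcoe, mem_iff_cross]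
  have hcu := (mem_Hsub.mp u.2).choose_spec
  have hcv := (mem_Hsub.mp v.2).choose_spec
  have hsplit : aOf ((u : (Rring α β)ˣ) : Rring α β) * cOf ((v : (Rring α β)ˣ) : Rring α β)
      - cOf ((u : (Rring α β)ˣ) : Rring α β) * aOf ((v : (Rring α β)ˣ) : Rring α β)
      = (p:ℤ_[p])^i * (aOf ((u : (Rring α β)ˣ) : Rring α β) * (mem_Hsub.mp v.2).choose
          - (mem_Hsub.mp u.2).choose * aOf ((v : (Rring α β)ˣ) : Rring α β)) := by
    linear_combination aOf ((u : (Rring α β)ˣ) : Rring α β) * hcv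
      - aOf ((v : (Rring α β)ˣ) : Rring α β) * hcu
  rw [hsplit, pow_succ, mul_dvd_mul_iff_left (pow_ne_zero i PadicInt.prime_p.ne_zero),
    ← toZMod_eq_zero_iff, map_sub, _root_.map_mul, _root_.map_mul]
  simp only [g2]
  rw [div_eq_div_iff (abar_ne i hi u) (abar_ne i hi v), sub_eq_zero]
  constructor <;> intro h <;> linear_combination -h

lemma g2_eval (i : ℕ) (u : Hsub α β i) (k : ℤ_[p])
    (hc : cOf ((u : (Rring α β)ˣ) : Rring α β) = (p:ℤ_[p])^i * k)
    (ha : aOf ((u : (Rring α β)ˣ) : Rring α β) = 1) : g2 i u = PadicInt.toZMod k := by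
  have hch : (mem_Hsub.mp u.2).choose = k := by
    have hs := (mem_Hsub.mp u.2).choose_spec
    exact mul_left_cancel₀ (pow_ne_zero i PadicInt.prime_p.ne_zero) (hs.symm.trans hc)
  simp only [g2]
  rw [hch, ha, _root_.map_one, div_one]

lemma cardrel (hirr : ∀ x : ℤ_[p], ¬ (p : ℤ_[p]) ∣ (x^2 - β * x - α)) (i : ℕ) (hi : 1 ≤ i) :
    (Hsub α β (i+1)).relIndex (Hsub α β i) = p := by
  show ((Hsub α β (i+1)).subgroupOf (Hsub α β i)).index = p
  rw [Subgroup.index_eq_card]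
  have e : ((Hsub α β i) ⧸ (Hsub α β (i+1)).subgroupOf (Hsub α β i)) ≃ ZMod p := by
    refine Equiv.ofBijective
      (fun x => Quotient.liftOn' x (g2 i)
        (fun u v h => (key2 i hi u v).mpr (QuotientGroup.leftRel_apply.mp h))) ⟨?_, ?_⟩
    · intro x y
      refine Quotient.inductionOn₂' x y fun u v h => ?_
      exact Quotient.sound' (QuotientGroup.leftRel_apply.mpr ((key2 i hi u v).mp h))
    · intro z
      have hmem : mkUnit hirr 1 ((p:ℤ_[p])^i * ((z.val : ℕ) : ℤ_[p])) (Or.inl p_not_dvd_one)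
          ∈ Hsub α β i := by
        rw [mem_Hsub, mkUnit_cOf]
        exact Dvd.intro _ rfl
      refine ⟨Quotient.mk'' ⟨_, hmem⟩, ?_⟩
      show g2 i (⟨_, hmem⟩ : Hsub α β i) = z
      rw [g2_eval i ⟨_, hmem⟩ ((z.val : ℕ) : ℤ_[p]) (mkUnit_cOf hirr _ _ (Or.inl p_not_dvd_one))
        (mkUnit_aOf hirr _ _ (Or.inl p_not_dvd_one)), map_natCast]
      exact ZMod.natCast_rightInverse z
  rw [Nat.card_congr e, Nat.card_zmod]

lemma index_Hsub (hirr : ∀ x : ℤ_[p], ¬ (p : ℤ_[p]) ∣ (x^2 - β * x - α)) :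
    ∀ j : ℕ, 1 ≤ j → (Hsub α β j).index = p^(j-1) * (p+1) := by
  intro j hj
  induction j with
  | zero => omega
  | succ n ih =>
    rcases Nat.eq_zero_or_pos n with hn | hn
    · subst hn
      rw [Subgroup.index_eq_card, card1 hirr]
      simp
    · have hle : Hsub α β (n+1) ≤ Hsub α β n := fun u hu =>
        mem_Hsub.mpr ((pow_dvd_pow _ (Nat.le_succ n)).trans (mem_Hsub.mp hu))
      rw [← Subgroup.relIndex_mul_index hle, cardrel hirr n hn, ih hn]
      obtain ⟨m, rfl⟩ : ∃ m, n = m + 1 := ⟨n-1, by omega⟩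
      simp only [Nat.add_sub_cancel]
      ring

end Counting

end Stmt16Aux

/-- In the subring `R = {a·I + c·Δ : a, c ∈ ℤ_p}` of `M₂(ℤ_p)`, where `Δ = !![0,α;1,β]` and
`X² − βX − α` has no root modulo `p`, the set `{a·I + c·Δ ∈ R^× : c ∈ p^jℤ_p}` is a subgroup
of `R^×` of index `p^{j−1}(p+1)` for every `j ≥ 1`. -/
theorem stmt16 (p : ℕ) [Fact (Nat.Prime p)] (α β : ℤ_[p])
    (hirr : ∀ x : ℤ_[p], ¬ (p : ℤ_[p]) ∣ (x^2 - β * x - α)) :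
    ∃ R : Subring (Matrix (Fin 2) (Fin 2) ℤ_[p]),
      (R : Set (Matrix (Fin 2) (Fin 2) ℤ_[p])) =
        {M | ∃ a c : ℤ_[p],
          M = a • (1 : Matrix (Fin 2) (Fin 2) ℤ_[p]) + c • !![0, α; 1, β]} ∧
      ∀ j : ℕ, 1 ≤ j → ∃ H : Subgroup Rˣ,
        (∀ u : Rˣ, u ∈ H ↔ ∃ a c : ℤ_[p], (p : ℤ_[p])^j ∣ c ∧
          ((u : R) : Matrix (Fin 2) (Fin 2) ℤ_[p]) =
            a • (1 : Matrix (Fin 2) (Fin 2) ℤ_[p]) + c • !![0, α; 1, β]) ∧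
        H.index = p^(j-1) * (p+1) := by
  refine ⟨Stmt16Aux.Rring α β, ?_, ?_⟩
  · ext M
    simp only [SetLike.mem_coe, Stmt16Aux.mem_Rring_iff, Set.mem_setOf_eq, Stmt16Aux.nf]
  · intro j hj
    refine ⟨Stmt16Aux.Hsub α β j, fun u => ?_, Stmt16Aux.index_Hsub hirr j hj⟩
    rw [Stmt16Aux.mem_Hsub]
    constructor
    · intro h
      exact ⟨Stmt16Aux.aOf _, Stmt16Aux.cOf _, h,
        by rw [Stmt16Aux.nf]; exact Stmt16Aux.coe_nf _⟩
    · rintro ⟨a, c, hdvd, heq⟩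
      rw [Stmt16Aux.nf] at heq
      rw [(Stmt16Aux.aOf_cOf_eq heq).2]
      exact hdvd
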